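/- For any two density matrices ρ and σ on a finite-dimensional complex Hilbert space with the support of ρ contained in the support of σ, the quantum relative entropy D(ρ‖σ) = Tr(ρ log ρ) − Tr(ρ log σ) is nonnegative, with equality if and only if ρ = σ. -/

import Mathlib

open Matrix Kronecker BigOperators ComplexOrder
noncomputable section

namespace QI

variable {m n : Type*} [Fintype m] [DecidableEq m] [Fintype n] [DecidableEq n]

/-- A density matrix: positive semidefinite with unit trace. -/
def IsDensity (ρ : Matrix n n ℂ) : Prop := ρ.PosSemidef ∧ ρ.trace = 1

/-- Real logarithm extended by `rlog 0 = 0` (functional calculus on the support). -/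
def rlog (x : ℝ) : ℝ := if x = 0 then 0 else Real.log x

/-- Matrix logarithm on the support, via the spectral decomposition of a Hermitian matrix. -/
def matLog (A : Matrix n n ℂ) : Matrix n n ℂ :=
  if h : A.IsHermitian then
    (h.eigenvectorUnitary : Matrix n n ℂ) *
      Matrix.diagonal (fun i => (rlog (h.eigenvalues i) : ℂ)) *
      (star (h.eigenvectorUnitary : Matrix n n ℂ))
  else 0

/-- Von Neumann entropy `H(ρ) = -Tr(ρ log ρ)`. -/
def vnEnt (A : Matrix n n ℂ) : ℝ := -(A * matLog A).trace.re

/-- Quantum relative entropy `D(ρ‖σ) = Tr(ρ log ρ) - Tr(ρ log σ)`. -/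
def relEnt (ρ σ : Matrix n n ℂ) : ℝ := ((ρ * matLog ρ).trace - (ρ * matLog σ).trace).re

/-- Support of `ρ` is contained in the support of `σ` (for PSD matrices: `ker σ ⊆ ker ρ`). -/
def suppLE (ρ σ : Matrix n n ℂ) : Prop := ∀ v : n → ℂ, σ.mulVec v = 0 → ρ.mulVec v = 0

/-- Partial trace over the second (B) factor. -/
def ptraceB (ρ : Matrix (m × n) (m × n) ℂ) : Matrix m m ℂ :=
  Matrix.of fun i j => ∑ k : n, ρ (i, k) (j, k)

/-- Partial trace over the first (A) factor. -/
def ptraceA (ρ : Matrix (m × n) (m × n) ℂ) : Matrix n n ℂ :=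
  Matrix.of fun i j => ∑ k : m, ρ (k, i) (k, j)

/-- Quantum mutual information `I(A;B) = H(A) + H(B) - H(AB)`. -/
def mutInfo (ρ : Matrix (m × n) (m × n) ℂ) : ℝ :=
  vnEnt (ptraceB ρ) + vnEnt (ptraceA ρ) - vnEnt ρ

/-- Rank-one projector `|v⟩⟨v|`. -/
def proj (v : m → ℂ) : Matrix m m ℂ := Matrix.vecMulVec v (star v)

/-- A family of vectors indexed by `m` forming an orthonormal basis of `ℂ^m`. -/
def ONB (v : m → m → ℂ) : Prop :=
  ∀ x y, (star (v x)) ⬝ᵥ (v y) = if x = y then 1 else 0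

/-- Probability of outcome `x` of a projective measurement on the `A` system. -/
def measProb (v : m → m → ℂ) (ρ : Matrix (m × n) (m × n) ℂ) (x : m) : ℝ :=
  ((((proj (v x)) ⊗ₖ (1 : Matrix n n ℂ)) * ρ).trace).re

/-- Conditional state `ρ_x^B` of system `B` given outcome `x` on `A`. -/
def condState (v : m → m → ℂ) (ρ : Matrix (m × n) (m × n) ℂ) (x : m) : Matrix n n ℂ :=
  ((measProb v ρ x)⁻¹ : ℝ) •
    ptraceA (((proj (v x)) ⊗ₖ (1 : Matrix n n ℂ)) * ρ * ((proj (v x)) ⊗ₖ (1 : Matrix n n ℂ)))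

/-- The post-measurement classical-quantum state `σ^{XB} = Σ_x p(x) |x⟩⟨x| ⊗ ρ_x^B`. -/
def cqState (v : m → m → ℂ) (ρ : Matrix (m × n) (m × n) ℂ) : Matrix (m × n) (m × n) ℂ :=
  ∑ x : m, ((measProb v ρ x : ℝ) : ℂ) • ((Matrix.single x x (1 : ℂ)) ⊗ₖ condState v ρ x)

/-- Classical correlations: `max` over projective measurements on `A` of `I(X;B)`. -/
def classCorr (ρ : Matrix (m × n) (m × n) ℂ) : ℝ :=
  sSup { r : ℝ | ∃ v : m → m → ℂ, ONB v ∧ r = mutInfo (cqState v ρ) }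

/-- Quantum discord `D(A;B) = I(A;B) - max I(X;B)`. -/
def discord (ρ : Matrix (m × n) (m × n) ℂ) : ℝ := mutInfo ρ - classCorr ρ

/-- A separable bipartite state: a finite convex combination of product density matrices. -/
def Separable (ρ : Matrix (m × n) (m × n) ℂ) : Prop :=
  ∃ (k : ℕ) (p : Fin k → ℝ) (σA : Fin k → Matrix m m ℂ) (σB : Fin k → Matrix n n ℂ),
    (∀ i, 0 ≤ p i) ∧ (∑ i, p i) = 1 ∧ (∀ i, IsDensity (σA i)) ∧ (∀ i, IsDensity (σB i)) ∧
      ρ = ∑ i, ((p i : ℝ) : ℂ) • ((σA i) ⊗ₖ (σB i))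

end QI

section KleinHelpers
open Matrix Complex

variable {N : Type*} [Fintype N] [DecidableEq N]

private lemma trace_diag_conj (W : Matrix N N ℂ) (d e : N → ℝ) :
    (Matrix.diagonal (fun i => (d i : ℂ)) * W * Matrix.diagonal (fun j => (e j : ℂ)) * star W).trace
    = ↑(∑ i, ∑ j, d i * e j * Complex.normSq (W i j)) := by
  have hentry : ∀ i, (Matrix.diagonal (fun i => (d i : ℂ)) *
      (W * (Matrix.diagonal (fun j => (e j : ℂ)) * star W))) i i
      = ((∑ j, d i * e j * Complex.normSq (W i j) : ℝ) : ℂ) := by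
    intro i
    rw [Matrix.diagonal_mul, Matrix.mul_apply]
    push_cast
    rw [Finset.mul_sum]
    refine Finset.sum_congr rfl fun j _ => ?_
    rw [Matrix.diagonal_mul, Matrix.star_apply, Complex.star_def,
      show W i j * ((e j : ℂ) * (starRingEnd ℂ) (W i j))
        = (e j : ℂ) * (W i j * (starRingEnd ℂ) (W i j)) by ring, Complex.mul_conj]
    ring
  simp only [Matrix.mul_assoc, Matrix.trace, Matrix.diag_apply]
  rw [Finset.sum_congr rfl fun i _ => hentry i]
  push_cast
  rfl

private lemma trace_sandwich (U V : Matrix.unitaryGroup N ℂ) (d e : N → ℝ) :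
    (((U : Matrix N N ℂ) * Matrix.diagonal (fun i => (d i : ℂ)) * star (U : Matrix N N ℂ)) *
      ((V : Matrix N N ℂ) * Matrix.diagonal (fun j => (e j : ℂ)) * star (V : Matrix N N ℂ))).trace
    = ↑(∑ i, ∑ j, d i * e j *
        Complex.normSq ((star (U : Matrix N N ℂ) * (V : Matrix N N ℂ)) i j)) := by
  calc (((U : Matrix N N ℂ) * Matrix.diagonal (fun i => (d i : ℂ)) * star (U : Matrix N N ℂ)) *
      ((V : Matrix N N ℂ) * Matrix.diagonal (fun j => (e j : ℂ)) * star (V : Matrix N N ℂ))).trace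
      = ((U : Matrix N N ℂ) * (Matrix.diagonal (fun i => (d i : ℂ)) *
          (star (U : Matrix N N ℂ) * (V : Matrix N N ℂ)) * Matrix.diagonal (fun j => (e j : ℂ)) *
          star (V : Matrix N N ℂ))).trace := by
        simp only [Matrix.mul_assoc]
    _ = ((Matrix.diagonal (fun i => (d i : ℂ)) *
          (star (U : Matrix N N ℂ) * (V : Matrix N N ℂ)) * Matrix.diagonal (fun j => (e j : ℂ)) *
          star (V : Matrix N N ℂ)) * (U : Matrix N N ℂ)).trace := Matrix.trace_mul_comm _ _
    _ = ((Matrix.diagonal (fun i => (d i : ℂ)) *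
          (star (U : Matrix N N ℂ) * (V : Matrix N N ℂ)) * Matrix.diagonal (fun j => (e j : ℂ)) *
          star (star (U : Matrix N N ℂ) * (V : Matrix N N ℂ)))).trace := by
        rw [show star (star (U : Matrix N N ℂ) * (V : Matrix N N ℂ))
            = star (V : Matrix N N ℂ) * (U : Matrix N N ℂ) by
          rw [StarMul.star_mul, star_star], Matrix.mul_assoc]
    _ = _ := trace_diag_conj _ _ _

private lemma unitary_row_sum (W : Matrix.unitaryGroup N ℂ) (i : N) :
    ∑ j, Complex.normSq ((W : Matrix N N ℂ) i j) = 1 := by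
  have h := W.2.2
  have h1 : ((W : Matrix N N ℂ) * star (W : Matrix N N ℂ)) i i = 1 := by
    rw [h]; simp [Matrix.one_apply]
  rw [Matrix.mul_apply] at h1
  have : (↑(∑ j, Complex.normSq ((W : Matrix N N ℂ) i j)) : ℂ) = 1 := by
    push_cast
    rw [← h1]
    refine Finset.sum_congr rfl fun j _ => ?_
    rw [Matrix.star_apply, Complex.star_def, Complex.mul_conj]
  exact_mod_cast this

private lemma unitary_col_sum (W : Matrix.unitaryGroup N ℂ) (j : N) :
    ∑ i, Complex.normSq ((W : Matrix N N ℂ) i j) = 1 := by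
  have h := W.2.1
  have h1 : (star (W : Matrix N N ℂ) * (W : Matrix N N ℂ)) j j = 1 := by
    rw [h]; simp [Matrix.one_apply]
  rw [Matrix.mul_apply] at h1
  have : (↑(∑ i, Complex.normSq ((W : Matrix N N ℂ) i j)) : ℂ) = 1 := by
    push_cast
    rw [← h1]
    refine Finset.sum_congr rfl fun i _ => ?_
    rw [Matrix.star_apply, Complex.star_def, mul_comm, Complex.mul_conj]
  exact_mod_cast this

private lemma klein_scalar {a b : ℝ} (ha : 0 ≤ a) (hb : 0 ≤ b) (hab : b = 0 → a = 0) :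
    a - b ≤ a * QI.rlog a - a * QI.rlog b ∧
      (a * QI.rlog a - a * QI.rlog b = a - b ↔ a = b) := by
  rcases ha.eq_or_lt with h0 | hpos
  · rw [← h0, QI.rlog, if_pos rfl]
    refine ⟨by linarith, ?_, ?_⟩
    · intro h; linarith
    · intro h; linarith
  · have hb0 : b ≠ 0 := fun h => hpos.ne' (hab h)
    have hbpos : 0 < b := hb.lt_of_ne (Ne.symm hb0)
    have hlogdiv : Real.log (b / a) = Real.log b - Real.log a := Real.log_div hb0 hpos.ne'
    have hle : Real.log (b / a) ≤ b / a - 1 := Real.log_le_sub_one_of_pos (div_pos hbpos hpos)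
    have ha' : a * (b / a - 1) = b - a := by field_simp
    have key : a * (Real.log b - Real.log a) ≤ b - a := by
      rw [← hlogdiv, ← ha']
      exact mul_le_mul_of_nonneg_left hle hpos.le
    rw [QI.rlog, QI.rlog, if_neg hpos.ne', if_neg hb0]
    refine ⟨by nlinarith [key], ?_, ?_⟩
    · intro h
      by_contra hne
      have hne' : b / a ≠ 1 := by
        intro hd
        exact hne ((div_eq_one_iff_eq hpos.ne').mp hd).symm
      have hlt : Real.log (b / a) < b / a - 1 :=
        Real.log_lt_sub_one_of_pos (div_pos hbpos hpos) hne'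
      have : a * Real.log (b / a) < a * (b / a - 1) := mul_lt_mul_of_pos_left hlt hpos
      rw [hlogdiv, ha'] at this
      nlinarith [this]
    · intro h; subst h; ring

end KleinHelpers

open QI Matrix Kronecker in
/-- nonnegativity and faithfulness of quantum relative entropy. -/
theorem relEnt_nonneg_and_eq_zero_iff {n : Type*} [Fintype n] [DecidableEq n]
    (ρ σ : Matrix n n ℂ) (hρ : IsDensity ρ) (hσ : IsDensity σ) (hsupp : suppLE ρ σ) :
    0 ≤ relEnt ρ σ ∧ (relEnt ρ σ = 0 ↔ ρ = σ) := by
  obtain ⟨hρp, hρt⟩ := hρ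
  obtain ⟨hσp, hσt⟩ := hσ
  have hρH : ρ.IsHermitian := hρp.1
  have hσH : σ.IsHermitian := hσp.1
  set p : n → ℝ := hρH.eigenvalues with hp
  set q : n → ℝ := hσH.eigenvalues with hq
  set Uu := hρH.eigenvectorUnitary with hUu
  set Vu := hσH.eigenvectorUnitary with hVu
  set U : Matrix n n ℂ := (Uu : Matrix n n ℂ) with hU
  set V : Matrix n n ℂ := (Vu : Matrix n n ℂ) with hV
  set W : Matrix n n ℂ := star U * V with hWdef
  set c : n → n → ℝ := fun i j => Complex.normSq (W i j) with hc
  set Wu : Matrix.unitaryGroup n ℂ := (star Uu) * Vu with hWu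
  have hWucoe : (Wu : Matrix n n ℂ) = W := rfl
  have hρspec : ρ = U * Matrix.diagonal (fun i => (p i : ℂ)) * star U := hρH.spectral_theorem
  have hσspec : σ = V * Matrix.diagonal (fun j => (q j : ℂ)) * star V := hσH.spectral_theorem
  have hlogρ : matLog ρ = U * Matrix.diagonal (fun i => (rlog (p i) : ℂ)) * star U := by
    unfold QI.matLog
    rw [dif_pos hρH]
  have hlogσ : matLog σ = V * Matrix.diagonal (fun j => (rlog (q j) : ℂ)) * star V := by
    unfold QI.matLog
    rw [dif_pos hσH]
  have hpnn : ∀ i, 0 ≤ p i := fun i => hρp.eigenvalues_nonneg i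
  have hqnn : ∀ j, 0 ≤ q j := fun j => hσp.eigenvalues_nonneg j
  -- trace formulas
  have hA : (ρ * matLog ρ).trace = ((∑ i, p i * rlog (p i) : ℝ) : ℂ) := by
    rw [hlogρ]
    conv_lhs => rw [hρspec]
    rw [trace_sandwich Uu Uu p (fun i => rlog (p i)),
      show star (Uu : Matrix n n ℂ) * (Uu : Matrix n n ℂ) = 1 from Uu.2.1]
    norm_cast
    refine Finset.sum_congr rfl fun i _ => ?_
    rw [Finset.sum_eq_single i]
    · simp
    · intro j _ hj
      simp [Matrix.one_apply, (Ne.symm hj)]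
    · simp
  have hB : (ρ * matLog σ).trace = ((∑ i, ∑ j, p i * rlog (q j) * c i j : ℝ) : ℂ) := by
    rw [hlogσ]
    conv_lhs => rw [hρspec]
    rw [trace_sandwich Uu Vu p (fun j => rlog (q j))]
  -- trace of ρ and σ as eigenvalue sums
  have htrp : ∑ i, p i = 1 := by
    have htr : ρ.trace = ((∑ i, p i : ℝ) : ℂ) := by
      rw [hρspec, Matrix.trace_mul_cycle,
        show star (Uu : Matrix n n ℂ) * (Uu : Matrix n n ℂ) = 1 from Uu.2.1,
        Matrix.one_mul, Matrix.trace_diagonal]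
      push_cast
      rfl
    rw [hρt] at htr
    exact_mod_cast htr.symm
  have htrq : ∑ j, q j = 1 := by
    have htr : σ.trace = ((∑ j, q j : ℝ) : ℂ) := by
      rw [hσspec, Matrix.trace_mul_cycle,
        show star (Vu : Matrix n n ℂ) * (Vu : Matrix n n ℂ) = 1 from Vu.2.1,
        Matrix.one_mul, Matrix.trace_diagonal]
      push_cast
      rfl
    rw [hσt] at htr
    exact_mod_cast htr.symm
  have hrow : ∀ i, ∑ j, c i j = 1 := fun i => by
    have := unitary_row_sum Wu i
    rwa [hWucoe] at this
  have hcol : ∀ j, ∑ i, c i j = 1 := fun j => by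
    have := unitary_col_sum Wu j
    rwa [hWucoe] at this
  -- support condition
  have hsup : ∀ i j, q j = 0 → p i = 0 ∨ W i j = 0 := by
    intro i j hqj
    have hσV : σ * V = V * Matrix.diagonal (fun j => (q j : ℂ)) := by
      conv_lhs => rw [hσspec]
      rw [Matrix.mul_assoc, show star (Vu : Matrix n n ℂ) * (Vu : Matrix n n ℂ) = 1 from Vu.2.1,
        Matrix.mul_one]
    have hcolzero : σ.mulVec (fun k => V k j) = 0 := by
      funext i'
      have h1 : σ.mulVec (fun k => V k j) i' = (σ * V) i' j := by
        simp [Matrix.mulVec, dotProduct, Matrix.mul_apply]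
      rw [Pi.zero_apply, h1, hσV, Matrix.mul_diagonal, hqj]
      simp
    have hρcol := hsupp _ hcolzero
    have hρV : ∀ i', (ρ * V) i' j = 0 := by
      intro i'
      have h1 := congrFun hρcol i'
      simpa [Matrix.mulVec, dotProduct, Matrix.mul_apply] using h1
    have hDW : (p i : ℂ) * W i j = 0 := by
      have h1 : star U * (ρ * V) = Matrix.diagonal (fun i => (p i : ℂ)) * W := by
        conv_lhs => rw [hρspec]
        rw [hWdef]
        simp only [← Matrix.mul_assoc]
        rw [show star (Uu : Matrix n n ℂ) * (Uu : Matrix n n ℂ) = 1 from Uu.2.1, Matrix.one_mul]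
      have h2 : (star U * (ρ * V)) i j = 0 := by
        rw [Matrix.mul_apply]
        exact Finset.sum_eq_zero fun k _ => by rw [hρV k, mul_zero]
      rw [h1, Matrix.diagonal_mul] at h2
      exact h2
    rcases mul_eq_zero.mp hDW with h | h
    · left; exact_mod_cast h
    · right; exact h
  -- the pointwise Klein terms
  set F : n → n → ℝ :=
    fun i j => c i j * (p i * rlog (p i) - p i * rlog (q j) - p i + q j) with hF
  have hFkey : ∀ i j, 0 ≤ F i j ∧ (F i j = 0 ↔ c i j = 0 ∨ p i = q j) := by
    intro i j
    by_cases hcz : c i j = 0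
    · constructor
      · simp [hF, hcz]
      · simp [hF, hcz]
    · have hW0 : W i j ≠ 0 := fun h => hcz (by simp [hc, h])
      have hab : q j = 0 → p i = 0 := fun h => (hsup i j h).resolve_right hW0
      obtain ⟨hle, hiff⟩ := klein_scalar (hpnn i) (hqnn j) hab
      have hcnn : 0 ≤ c i j := Complex.normSq_nonneg _
      constructor
      · apply mul_nonneg hcnn
        linarith
      · constructor
        · intro h
          rcases mul_eq_zero.mp h with h' | h'
          · exact absurd h' hcz
          · right
            exact hiff.mp (by linarith)
        · intro h
          rcases h with h' | h'
          · exact absurd h' hcz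
          · have : p i * rlog (p i) - p i * rlog (q j) = p i - q j := hiff.mpr h'
            have hz : p i * rlog (p i) - p i * rlog (q j) - p i + q j = 0 := by linarith
            rw [hF]
            dsimp only
            rw [hz, mul_zero]
  -- sum identities
  have e1 : ∑ i, ∑ j, c i j * (p i * rlog (p i)) = ∑ i, p i * rlog (p i) := by
    refine Finset.sum_congr rfl fun i _ => ?_
    rw [← Finset.sum_mul, hrow i, one_mul]
  have e2 : ∑ i, ∑ j, c i j * p i = 1 := by
    rw [show ∑ i, ∑ j, c i j * p i = ∑ i, p i from
      Finset.sum_congr rfl fun i _ => by rw [← Finset.sum_mul, hrow i, one_mul], htrp]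
  have e3 : ∑ i, ∑ j, c i j * q j = 1 := by
    rw [Finset.sum_comm]
    rw [show ∑ j, ∑ i, c i j * q j = ∑ j, q j from
      Finset.sum_congr rfl fun j _ => by rw [← Finset.sum_mul, hcol j, one_mul], htrq]
  have hsumF : ∑ i, ∑ j, F i j
      = (∑ i, p i * rlog (p i)) - (∑ i, ∑ j, p i * rlog (q j) * c i j) := by
    have expand : ∀ i j, F i j = c i j * (p i * rlog (p i)) - p i * rlog (q j) * c i j
        - c i j * p i + c i j * q j := by
      intro i j
      rw [hF]
      ring
    calc ∑ i, ∑ j, F i j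
        = ∑ i, ∑ j, (c i j * (p i * rlog (p i)) - p i * rlog (q j) * c i j
            - c i j * p i + c i j * q j) := by
          exact Finset.sum_congr rfl fun i _ => Finset.sum_congr rfl fun j _ => expand i j
      _ = (∑ i, ∑ j, c i j * (p i * rlog (p i))) - (∑ i, ∑ j, p i * rlog (q j) * c i j)
            - (∑ i, ∑ j, c i j * p i) + (∑ i, ∑ j, c i j * q j) := by
          simp only [Finset.sum_add_distrib, Finset.sum_sub_distrib]
      _ = _ := by
          rw [e1, e2, e3]
          ring
  have hrel : relEnt ρ σ = ∑ i, ∑ j, F i j := by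
    rw [QI.relEnt, hA, hB, ← Complex.ofReal_sub, Complex.ofReal_re, hsumF]
  have hFnn : ∀ i ∈ Finset.univ, (0:ℝ) ≤ ∑ j, F i j := fun i _ =>
    Finset.sum_nonneg fun j _ => (hFkey i j).1
  constructor
  · rw [hrel]
    exact Finset.sum_nonneg hFnn
  · constructor
    · intro h0
      have hz : ∀ i j, F i j = 0 := by
        rw [hrel] at h0
        have h1 := (Finset.sum_eq_zero_iff_of_nonneg hFnn).mp h0
        intro i j
        have h2 := (Finset.sum_eq_zero_iff_of_nonneg
          (fun j _ => (hFkey i j).1)).mp (h1 i (Finset.mem_univ i))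
        exact h2 j (Finset.mem_univ j)
      have hpq : ∀ i j, ((p i : ℂ) - (q j : ℂ)) * W i j = 0 := by
        intro i j
        rcases (hFkey i j).2.mp (hz i j) with h | h
        · rw [show W i j = 0 from Complex.normSq_eq_zero.mp h, mul_zero]
        · rw [show ((p i : ℂ) - (q j : ℂ)) = 0 by rw [h, sub_self], zero_mul]
      have hDWWD : Matrix.diagonal (fun i => (p i : ℂ)) * W
          = W * Matrix.diagonal (fun j => (q j : ℂ)) := by
        ext i j
        rw [Matrix.diagonal_mul, Matrix.mul_diagonal]
        linear_combination hpq i j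
      have hρV : ρ * V = σ * V := by
        calc ρ * V = U * (Matrix.diagonal (fun i => (p i : ℂ)) * W) := by
              conv_lhs => rw [hρspec]
              rw [hWdef]
              simp only [Matrix.mul_assoc]
          _ = U * (W * Matrix.diagonal (fun j => (q j : ℂ))) := by rw [hDWWD]
          _ = (U * star U) * (V * Matrix.diagonal (fun j => (q j : ℂ))) := by
              rw [hWdef]
              simp only [Matrix.mul_assoc]
          _ = V * Matrix.diagonal (fun j => (q j : ℂ)) := by
              rw [show (Uu : Matrix n n ℂ) * star (Uu : Matrix n n ℂ) = 1 from Uu.2.2,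
                Matrix.one_mul]
          _ = V * Matrix.diagonal (fun j => (q j : ℂ)) * (star V * V) := by
              rw [show star (Vu : Matrix n n ℂ) * (Vu : Matrix n n ℂ) = 1 from Vu.2.1,
                Matrix.mul_one]
          _ = σ * V := by
              conv_rhs => rw [hσspec]
              simp only [Matrix.mul_assoc]
      have := congrArg (fun M => M * star V) hρV
      simp only [Matrix.mul_assoc] at this
      rwa [show (Vu : Matrix n n ℂ) * star (Vu : Matrix n n ℂ) = 1 from Vu.2.2,
        Matrix.mul_one, Matrix.mul_one] at this
    · intro h
      subst h
      simp [QI.relEnt]
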